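/- Let A be a finite idempotent algebra and g a ternary term operation of A. Then there exists a ternary term operation g′ of A such that g′(x, g′(x,y,y), g′(x,y,y)) = g′(x,y,y) for all x,y ∈ A, and such that for all a,b ∈ A and every congruence θ of Sg{a,b}: if for all u,v,w ∈ {a,b} the element g(u,v,w) is θ-congruent to the majority element of (u,v,w) (the element of {a,b} occurring at least twice among u,v,w), then the same holds for g′. -/
import Mathlib


namespace UA

/-- Terms over a signature `(ι, ar)` with `n` variables. -/
inductive Term (ι : Type) (ar : ι → ℕ) (n : ℕ) : Type where
  | var : Fin n → Term ι ar n
  | app : (i : ι) → (Fin (ar i) → Term ι ar n) → Term ι ar n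

/-- Evaluation of a term in an algebra with operations `ops`. -/
def Term.eval {ι : Type} {ar : ι → ℕ} {A : Type} (ops : ∀ i : ι, (Fin (ar i) → A) → A)
    {n : ℕ} : Term ι ar n → (Fin n → A) → A
  | .var j, x => x j
  | .app i ts, x => ops i fun k => Term.eval ops (ts k) x

variable {ι : Type} {ar : ι → ℕ} {A : Type}

/-- An algebra is idempotent if every basic operation is. -/
def Idempotent (ops : ∀ i : ι, (Fin (ar i) → A) → A) : Prop :=
  ∀ (i : ι) (x : A), ops i (fun _ => x) = x

/-- A subuniverse: a subset closed under all basic operations. -/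
def IsSubuniverse (ops : ∀ i : ι, (Fin (ar i) → A) → A) (S : Set A) : Prop :=
  ∀ (i : ι) (xs : Fin (ar i) → A), (∀ k, xs k ∈ S) → ops i xs ∈ S

/-- The subuniverse generated by `X`. -/
def Sg (ops : ∀ i : ι, (Fin (ar i) → A) → A) (X : Set A) : Set A :=
  ⋂₀ {S | IsSubuniverse ops S ∧ X ⊆ S}

/-- A tolerance: a reflexive symmetric compatible binary relation. -/
def IsTolerance (ops : ∀ i : ι, (Fin (ar i) → A) → A) (τ : A → A → Prop) : Prop :=
  (∀ x, τ x x) ∧ (∀ x y, τ x y → τ y x) ∧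
  ∀ (i : ι) (xs ys : Fin (ar i) → A), (∀ k, τ (xs k) (ys k)) → τ (ops i xs) (ops i ys)

/-- A congruence: a compatible equivalence relation. -/
def IsCongruence (ops : ∀ i : ι, (Fin (ar i) → A) → A) (θ : A → A → Prop) : Prop :=
  Equivalence θ ∧
  ∀ (i : ι) (xs ys : Fin (ar i) → A), (∀ k, θ (xs k) (ys k)) → θ (ops i xs) (ops i ys)

/-- A congruence of the subalgebra with universe `B`, viewed as a partial
equivalence relation on the big algebra whose domain is exactly `B` and which is
compatible with all operations. -/
def IsCongruenceOn (ops : ∀ i : ι, (Fin (ar i) → A) → A) (B : Set A)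
    (θ : A → A → Prop) : Prop :=
  (∀ x y, θ x y → x ∈ B ∧ y ∈ B) ∧
  (∀ x ∈ B, θ x x) ∧
  (∀ x y, θ x y → θ y x) ∧
  (∀ x y z, θ x y → θ y z → θ x z) ∧
  ∀ (i : ι) (xs ys : Fin (ar i) → A), (∀ k, θ (xs k) (ys k)) → θ (ops i xs) (ops i ys)

/-- `f` is a binary term operation of the algebra. -/
def IsTermOp2 (ops : ∀ i : ι, (Fin (ar i) → A) → A) (f : A → A → A) : Prop :=
  ∃ t : Term ι ar 2, ∀ x y, f x y = t.eval ops ![x, y]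

/-- `g` is a ternary term operation of the algebra. -/
def IsTermOp3 (ops : ∀ i : ι, (Fin (ar i) → A) → A) (g : A → A → A → A) : Prop :=
  ∃ t : Term ι ar 3, ∀ x y z, g x y z = t.eval ops ![x, y, z]

/-- Connectivity of `a` and `b` in the hypergraph `H(A)` whose hyperedges are the
nonempty proper subuniverses: a chain of hyperedges with consecutive ones
intersecting, the first containing `a`, the last containing `b`. -/
def HConnected (ops : ∀ i : ι, (Fin (ar i) → A) → A) (a b : A) : Prop :=
  ∃ L : List (Set A),
    (∀ S ∈ L, IsSubuniverse ops S ∧ S.Nonempty ∧ S ≠ Set.univ) ∧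
    L.Chain' (fun S T => (S ∩ T).Nonempty) ∧
    ∃ h : L ≠ [], a ∈ L.head h ∧ b ∈ L.getLast h


/-- The majority element of a triple from a two-element set. -/
def maj {A : Type} (u v w : A) [DecidableEq A] : A :=
  if u = v ∨ u = w then u else v


/-- Substitution of terms into a term. -/
def Term.subst {ι : Type} {ar : ι → ℕ} {n m : ℕ} :
    Term ι ar n → (Fin n → Term ι ar m) → Term ι ar m
  | .var j, σ => σ j
  | .app i ts, σ => .app i fun k => Term.subst (ts k) σ

theorem Term.eval_subst {ι : Type} {ar : ι → ℕ} {A : Type}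
    (ops : ∀ i : ι, (Fin (ar i) → A) → A) {n m : ℕ}
    (t : Term ι ar n) (σ : Fin n → Term ι ar m) (x : Fin m → A) :
    (t.subst σ).eval ops x = t.eval ops (fun j => (σ j).eval ops x) := by
  induction t with
  | var j => rfl
  | app i ts ih => simp only [Term.subst, Term.eval, ih]

/-- Term operations respect congruences-on-a-subuniverse. -/
theorem term_respects {ι : Type} {ar : ι → ℕ} {A : Type}
    (ops : ∀ i : ι, (Fin (ar i) → A) → A) {B : Set A} {θ : A → A → Prop}
    (hθ : IsCongruenceOn ops B θ) {n : ℕ} (t : Term ι ar n)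
    (xs ys : Fin n → A) (h : ∀ k, θ (xs k) (ys k)) :
    θ (t.eval ops xs) (t.eval ops ys) := by
  induction t with
  | var j => exact h j
  | app i ts ih => exact hθ.2.2.2.2 i _ _ fun k => ih k

theorem subset_Sg {ι : Type} {ar : ι → ℕ} {A : Type}
    (ops : ∀ i : ι, (Fin (ar i) → A) → A) (X : Set A) : X ⊆ Sg ops X :=
  fun _ hx _ hS => hS.2 hx

private theorem iter_period {A : Type} (f : A → A) (i p : ℕ)
    (hp : f^[i + p] = f^[i]) : ∀ (k n : ℕ), i ≤ n → f^[n + k * p] = f^[n] := by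
  have h1 : ∀ n, i ≤ n → f^[n + p] = f^[n] := by
    intro n hn
    have : n + p = (n - i) + (i + p) := by omega
    rw [this, Function.iterate_add, hp, ← Function.iterate_add,
      Nat.sub_add_cancel hn]
  intro k
  induction k with
  | zero => intro n _; simp
  | succ k ih =>
    intro n hn
    have : n + (k + 1) * p = (n + k * p) + p := by ring
    rw [this, h1 _ (by omega), ih n hn]

private theorem exists_idem_iterate {A : Type} [Finite A] (f : A → A) :
    ∃ m : ℕ, 1 ≤ m ∧ ∀ x, f^[m] (f^[m] x) = f^[m] x := by
  obtain ⟨n₁, n₂, hne, heq⟩ :=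
    Finite.exists_ne_map_eq_of_infinite (fun n : ℕ => f^[n])
  have key : ∀ i j : ℕ, i < j → f^[i] = f^[j] →
      ∃ m : ℕ, 1 ≤ m ∧ ∀ x, f^[m] (f^[m] x) = f^[m] x := by
    intro i j hij he
    set p := j - i with hpdef
    have hp1 : 1 ≤ p := by omega
    have hp : f^[i + p] = f^[i] := by
      rw [show i + p = j by omega, ← he]
    refine ⟨(i + 1) * p, by nlinarith, fun x => ?_⟩
    have := iter_period f i p hp (i + 1) ((i + 1) * p) (by nlinarith)
    calc f^[(i + 1) * p] (f^[(i + 1) * p] x)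
        = f^[(i + 1) * p + (i + 1) * p] x := (Function.iterate_add_apply f _ _ x).symm
      _ = f^[(i + 1) * p] x := by rw [this]
  rcases lt_or_gt_of_ne hne with h | h
  · exact key n₁ n₂ h heq
  · exact key n₂ n₁ h heq.symm

private theorem exists_uniform_idem_iterate (A : Type) [Fintype A]
    [DecidableEq A] :
    ∃ N : ℕ, 1 ≤ N ∧ ∀ f : A → A, ∀ x, f^[N] (f^[N] x) = f^[N] x := by
  choose m hm1 hmidem using fun f : A → A => exists_idem_iterate f
  refine ⟨∏ f : A → A, m f, Finset.one_le_prod' (fun f _ => hm1 f), fun f x => ?_⟩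
  obtain ⟨k, hk⟩ : m f ∣ ∏ f : A → A, m f :=
    Finset.dvd_prod_of_mem m (Finset.mem_univ f)
  have hN1 : 1 ≤ ∏ f : A → A, m f := Finset.one_le_prod' (fun f _ => hm1 f)
  have hk1 : 1 ≤ k := by
    rcases Nat.eq_zero_or_pos k with h | h
    · rw [h, Nat.mul_zero] at hk; omega
    · exact h
  have he : ∀ k', 1 ≤ k' → ∀ y, (f^[m f])^[k'] y = f^[m f] y := by
    intro k'
    induction k' with
    | zero => omega
    | succ k' ih =>
      intro _ y
      rcases Nat.eq_zero_or_pos k' with h | h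
      · subst h; simp
      · rw [Function.iterate_succ_apply, ih h, hmidem f]
  rw [hk, Function.iterate_mul]
  calc (f^[m f])^[k] ((f^[m f])^[k] x)
      = f^[m f] (f^[m f] x) := by rw [he k hk1, he k hk1]
    _ = f^[m f] x := hmidem f x
    _ = (f^[m f])^[k] x := (he k hk1 x).symm

/-- any ternary term operation can be improved to one satisfying
`g'(x, g'(x,y,y), g'(x,y,y)) = g'(x,y,y)` while keeping its majority behaviour
modulo any congruence of any 2-generated subalgebra. -/
theorem stmt_7 {ι : Type} {ar : ι → ℕ} {A : Type} [Fintype A] [Nonempty A]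
    [DecidableEq A]
    (ops : ∀ i : ι, (Fin (ar i) → A) → A)
    (hidem : Idempotent ops)
    (g : A → A → A → A) (hg : IsTermOp3 ops g) :
    ∃ g' : A → A → A → A, IsTermOp3 ops g' ∧
      (∀ x y : A, g' x (g' x y y) (g' x y y) = g' x y y) ∧
      ∀ (a b : A) (θ : A → A → Prop),
        IsCongruenceOn ops (Sg ops ({a, b} : Set A)) θ →
        (∀ u v w : A, u ∈ ({a, b} : Set A) → v ∈ ({a, b} : Set A) →
          w ∈ ({a, b} : Set A) → θ (g u v w) (maj u v w)) →
        (∀ u v w : A, u ∈ ({a, b} : Set A) → v ∈ ({a, b} : Set A) →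
          w ∈ ({a, b} : Set A) → θ (g' u v w) (maj u v w)) := by
  obtain ⟨t, ht⟩ := hg
  obtain ⟨N, hN1, hNidem⟩ := exists_uniform_idem_iterate A
  -- iterated terms: s 0 = t, s (n+1) = t(x, s n, s n)
  let s : ℕ → Term ι ar 3 := fun n =>
    Nat.rec t (fun _ sn => t.subst ![Term.var 0, sn, sn]) n
  let G : ℕ → A → A → A → A := fun n x y z => (s n).eval ops ![x, y, z]
  have hG0 : ∀ x y z, G 0 x y z = g x y z := fun x y z => (ht x y z).symm
  have hGsucc : ∀ n x y z, G (n + 1) x y z = g x (G n x y z) (G n x y z) := by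
    intro n x y z
    show (Term.subst t ![Term.var 0, s n, s n]).eval ops ![x, y, z] = _
    rw [Term.eval_subst, ht]
    congr 1
    funext j
    fin_cases j <;> rfl
  -- diagonal is an iterate
  have hdiag : ∀ n x y, G n x y y = (fun u => g x u u)^[n + 1] y := by
    intro n
    induction n with
    | zero => intro x y; rw [hG0]; rfl
    | succ n ih =>
      intro x y
      rw [hGsucc, ih]
      exact (Function.iterate_succ_apply' (fun u => g x u u) (n + 1) y).symm
  refine ⟨G (N - 1), ⟨s (N - 1), fun x y z => rfl⟩, ?_, ?_⟩
  · intro x y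
    have hN : N - 1 + 1 = N := by omega
    rw [hdiag, hdiag, hN]
    exact hNidem (fun u => g x u u) y
  · intro a b θ hθ hbase
    have hsub : ({a, b} : Set A) ⊆ Sg ops {a, b} := subset_Sg ops _
    have hstep : ∀ n, (∀ u v w : A, u ∈ ({a, b} : Set A) → v ∈ ({a, b} : Set A) →
        w ∈ ({a, b} : Set A) → θ (G n u v w) (maj u v w)) := by
      intro n
      induction n with
      | zero =>
        intro u v w hu hv hw
        rw [hG0]; exact hbase u v w hu hv hw
      | succ n ih =>
        intro u v w hu hv hw
        have hc := ih u v w hu hv hw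
        set m := maj u v w with hm
        have hmab : m ∈ ({a, b} : Set A) := by
          rw [hm]
          unfold maj
          split <;> [exact hu; exact hv]
        have huu : θ u u := hθ.2.1 u (hsub hu)
        -- θ (g u c c) (g u m m)
        have h1 : θ (g u (G n u v w) (G n u v w)) (g u m m) := by
          rw [ht, ht]
          refine term_respects ops hθ t _ _ fun k => ?_
          fin_cases k <;> simpa using (by first | exact huu | exact hc)
        have h2 : θ (g u m m) m := by
          have := hbase u m m hu hmab hmab
          have hmaj : maj u m m = m := by
            by_cases h : u = m <;> simp [maj, h]
          rwa [hmaj] at this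
        rw [hGsucc]
        exact hθ.2.2.2.1 _ _ _ h1 h2
    exact hstep (N - 1)


end UA
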